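/- arXiv:1810.07061 — 3 statements merged into one kernel-verified Lean document; each statement's English description precedes it below -/
import Mathlib

section
/- Let (q_n) be a sequence of polynomials of degree at most M with Σ_{k=0}^{M}|λ_{n,k}| = 1 (coefficient normalization), and let Q be a fixed nonzero polynomial of degree M. Suppose there are scalars λ_n (the leading coefficients λ_{n,M} of q_n) such that q_n − λ_n Q → 0 uniformly on some compact set with infinitely many points, as n → ∞. Then liminf_{n→∞} |λ_n| > 0. -/
open Polynomial Filter

/-- If `q_n` are polynomials of degree at most `M` with coefficient normalization
`Σ_{k=0}^{M} |λ_{n,k}| = 1`, `Q` is a fixed nonzero polynomial of degree `M`, and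
`q_n − λ_{n,M} Q → 0` uniformly on a compact set with infinitely many points,
then `liminf_n |λ_{n,M}| > 0`. -/
theorem stmt4 (M : ℕ) (q : ℕ → ℂ[X]) (hdeg : ∀ n, (q n).natDegree ≤ M)
    (hnorm : ∀ n, ∑ k ∈ Finset.range (M + 1), ‖(q n).coeff k‖ = 1)
    (Q : ℂ[X]) (hQ : Q ≠ 0) (hQdeg : Q.natDegree = M)
    (K : Set ℂ) (hK : IsCompact K) (hKinf : K.Infinite)
    (hconv : TendstoUniformlyOn
      (fun n z => (q n).eval z - (q n).coeff M * Q.eval z) 0 atTop K) :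
    0 < Filter.liminf (fun n => ‖(q n).coeff M‖) atTop := by
  classical
  -- choose M+1 distinct points in K
  obtain ⟨s, hsK, hcard⟩ := hKinf.exists_subset_card_eq (M + 1)
  let e := s.equivFinOfCardEq hcard
  set z : Fin (M + 1) → ℂ := fun i => ((e.symm i : s) : ℂ) with hz
  have hzK : ∀ i, z i ∈ K := fun i => hsK (e.symm i).2
  have hzinj : Function.Injective z := by
    intro i j h
    have := Subtype.ext (p := fun x => x ∈ s) h
    simpa using e.symm.injective this
  -- Vandermonde
  set A : Matrix (Fin (M + 1)) (Fin (M + 1)) ℂ := Matrix.vandermonde z with hA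
  have hdet : A.det ≠ 0 := (Matrix.det_vandermonde_ne_zero_iff).2 hzinj
  have hinj : Function.Injective A.mulVecLin := by
    have : Function.Injective A.mulVec :=
      Matrix.mulVec_injective_iff_isUnit.2 ((Matrix.isUnit_iff_isUnit_det A).2 hdet.isUnit)
    exact this
  have hsurj : Function.Surjective A.mulVecLin :=
    (LinearMap.injective_iff_surjective).1 hinj
  let E : (Fin (M + 1) → ℂ) ≃ₗ[ℂ] (Fin (M + 1) → ℂ) :=
    LinearEquiv.ofBijective A.mulVecLin ⟨hinj, hsurj⟩
  set F := E.toContinuousLinearEquiv with hF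
  have hanti := F.antilipschitz
  set c0 : ℝ := max ((‖(F.symm : (Fin (M+1) → ℂ) →L[ℂ] (Fin (M+1) → ℂ))‖₊ : ℝ)) 1 with hc0def
  have hc0pos : (0:ℝ) < c0 := lt_of_lt_of_le one_pos (le_max_right _ _)
  have hbound : ∀ c : Fin (M + 1) → ℂ, ‖c‖ ≤ c0 * ‖A.mulVec c‖ := by
    intro c
    have h1 := hanti.le_mul_dist c 0
    have h2 : F c = A.mulVec c := rfl
    have h3 : F (0 : Fin (M+1) → ℂ) = 0 := map_zero _
    rw [h2, h3, dist_zero_right, dist_zero_right] at h1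
    calc ‖c‖ ≤ _ * ‖A.mulVec c‖ := h1
      _ ≤ c0 * ‖A.mulVec c‖ :=
        mul_le_mul_of_nonneg_right (le_max_left _ _) (norm_nonneg _)
  -- coefficient vectors
  set c : ℕ → Fin (M + 1) → ℂ := fun n k => (q n).coeff k with hc
  -- A.mulVec (c n) i = (q n).eval (z i)
  have hmul : ∀ n i, A.mulVec (c n) i = (q n).eval (z i) := by
    intro n i
    rw [Polynomial.eval_eq_sum_range' (lt_of_le_of_lt (hdeg n) (Nat.lt_succ_self M))]
    rw [← Fin.sum_univ_eq_sum_range (fun k => (q n).coeff k * z i ^ k)]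
    simp [Matrix.mulVec, dotProduct, hA, Matrix.vandermonde, mul_comm, hc]
  -- lower bound on ‖c n‖
  have hcnorm : ∀ n, (1:ℝ) ≤ (M + 1) * ‖c n‖ := by
    intro n
    have := hnorm n
    calc (1:ℝ) = ∑ k ∈ Finset.range (M + 1), ‖(q n).coeff k‖ := this.symm
      _ = ∑ k : Fin (M + 1), ‖(q n).coeff k‖ :=
        (Fin.sum_univ_eq_sum_range (fun k => ‖(q n).coeff k‖) (M+1)).symm
      _ ≤ ∑ _k : Fin (M + 1), ‖c n‖ := by
        refine Finset.sum_le_sum fun k _ => ?_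
        simpa [hc] using norm_le_pi_norm (c n) k
      _ = (M + 1) * ‖c n‖ := by simp [Finset.sum_const, mul_comm]
  -- δ
  set δ : ℝ := 1 / ((M + 1) * c0) with hδ
  have hMpos : (0:ℝ) < (M:ℝ) + 1 := by positivity
  have hδpos : 0 < δ := by
    rw [hδ]; positivity
  have hAlow : ∀ n, δ ≤ ‖A.mulVec (c n)‖ := by
    intro n
    have h1 : (1:ℝ) ≤ (M + 1) * (c0 * ‖A.mulVec (c n)‖) :=
      le_trans (hcnorm n) (by
        exact mul_le_mul_of_nonneg_left (hbound (c n)) (le_of_lt hMpos))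
    rw [hδ, div_le_iff₀ (by positivity)]
    linarith [h1]
  -- C bound for Q values
  set C : ℝ := 1 + ∑ i : Fin (M + 1), ‖Q.eval (z i)‖ with hC
  have hCpos : 0 < C := by
    have : (0:ℝ) ≤ ∑ i : Fin (M + 1), ‖Q.eval (z i)‖ :=
      Finset.sum_nonneg fun i _ => norm_nonneg _
    rw [hC]; linarith
  have hQle : ∀ i, ‖Q.eval (z i)‖ ≤ C := by
    intro i
    have : ‖Q.eval (z i)‖ ≤ ∑ j : Fin (M + 1), ‖Q.eval (z j)‖ :=
      Finset.single_le_sum (f := fun j => ‖Q.eval (z j)‖)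
        (fun j _ => norm_nonneg _) (Finset.mem_univ i)
    rw [hC]; linarith
  -- eventual bound
  have hev : ∀ᶠ n in atTop, δ / (2 * C) ≤ ‖(q n).coeff M‖ := by
    have := (Metric.tendstoUniformlyOn_iff.1 hconv) (δ/2) (by positivity)
    filter_upwards [this] with n hn
    have hup : ‖A.mulVec (c n)‖ ≤ δ/2 + ‖(q n).coeff M‖ * C := by
      rw [pi_norm_le_iff_of_nonneg (by positivity)]
      intro i
      have h1 := hn (z i) (hzK i)
      rw [hmul n i]
      have h2 : ‖(q n).eval (z i) - (q n).coeff M * Q.eval (z i)‖ < δ/2 := by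
        rw [show ((0 : ℂ → ℂ)) (z i) = 0 from rfl, dist_zero_left] at h1
        exact h1
      have h3 : ‖(q n).eval (z i)‖ ≤
          ‖(q n).eval (z i) - (q n).coeff M * Q.eval (z i)‖ +
            ‖(q n).coeff M * Q.eval (z i)‖ := by
        simpa using norm_add_le ((q n).eval (z i) - (q n).coeff M * Q.eval (z i))
          ((q n).coeff M * Q.eval (z i))
      have h4 : ‖(q n).coeff M * Q.eval (z i)‖ ≤ ‖(q n).coeff M‖ * C := by
        rw [norm_mul]
        exact mul_le_mul_of_nonneg_left (hQle i) (norm_nonneg _)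
      calc ‖(q n).eval (z i)‖ ≤ _ + _ := h3
        _ ≤ δ/2 + ‖(q n).coeff M‖ * C := add_le_add h2.le h4
    have h5 := hAlow n
    have h6 : δ/2 ≤ ‖(q n).coeff M‖ * C := by linarith
    rw [div_le_iff₀ (by positivity : (0:ℝ) < 2 * C)]
    nlinarith [h6]
  -- conclude
  have hcb : IsCoboundedUnder (· ≥ ·) atTop (fun n => ‖(q n).coeff M‖) := by
    refine isCoboundedUnder_ge_of_le atTop (x := 1) fun n => ?_
    have := hnorm n
    have h1 : ‖(q n).coeff M‖ ≤
        ∑ k ∈ Finset.range (M + 1), ‖(q n).coeff k‖ :=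
      Finset.single_le_sum (fun k _ => norm_nonneg _) (Finset.self_mem_range_succ M)
    linarith
  have := le_liminf_of_le hcb hev
  exact lt_of_lt_of_le (by positivity) this
end

section
/- Let f = (f₁,…,f_d) be holomorphic on a neighborhood of a compact continuum E and m = (m₁,…,m_d) ∈ ℕ^d. If for all n ≥ n₀ the common denominator Q_{n,m} of every multipoint Hermite–Padé approximant of f is unique and has degree exactly |m|, then f is polynomially independent with respect to m. -/
open Polynomial
open Topology Filter


lemma aux_eq_at {V : Set ℂ} (hV : IsOpen V) {r : ℂ} (hr : r ∈ V) {F G : ℂ → ℂ}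
    (hF : ContinuousOn F V) (hG : ContinuousOn G V)
    (h : ∀ z ∈ V, z ≠ r → F z = G z) : F r = G r := by
  have hne : (𝓝[V \ {r}] r).NeBot := by
    have heq : 𝓝[V \ {r}] r = 𝓝[{r}ᶜ] r := by
      rw [Set.diff_eq, Set.inter_comm]
      exact nhdsWithin_inter_of_mem' (mem_nhdsWithin_of_mem_nhds (hV.mem_nhds hr))
    rw [heq]; infer_instance
  have hFt : Filter.Tendsto F (𝓝[V \ {r}] r) (𝓝 (F r)) :=
    ((hF r hr).mono Set.diff_subset).tendsto
  have hGt : Filter.Tendsto G (𝓝[V \ {r}] r) (𝓝 (G r)) :=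
    ((hG r hr).mono Set.diff_subset).tendsto
  have hFG : F =ᶠ[𝓝[V \ {r}] r] G :=
    Filter.eventually_mem_set.mpr self_mem_nhdsWithin |>.mono
      (fun z hz => h z hz.1 (by simpa using hz.2))
  exact tendsto_nhds_unique (hFt.congr' hFG) hGt

lemma aux_dvd {V : Set ℂ} (hV : IsOpen V) {E : Set ℂ} (hEV : E ⊆ V) :
    ∀ (s : ℕ) (b : ℂ[X]), b.Monic → b.natDegree = s → (∀ w : ℂ, b.IsRoot w → w ∈ E) →
    ∀ (D : ℂ[X]) (h : ℂ → ℂ), ContinuousOn h V →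
      (∀ z ∈ V, D.eval z = b.eval z * h z) → b ∣ D := by
  intro s
  induction s with
  | zero =>
    intro b hb hdeg _ D h _ _
    rw [hb.natDegree_eq_zero.mp hdeg]
    exact one_dvd D
  | succ s ih =>
    intro b hb hdeg hroots D h hcont heq
    obtain ⟨r, hr⟩ : ∃ z : ℂ, b.IsRoot z := by
      apply Complex.exists_root
      rw [degree_eq_natDegree hb.ne_zero, hdeg]
      exact_mod_cast Nat.succ_pos s
    have hrE : r ∈ E := hroots r hr
    have hbfac : (X - C r) * (b /ₘ (X - C r)) = b := mul_divByMonic_eq_iff_isRoot.mpr hr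
    set b₁ := b /ₘ (X - C r) with hb₁def
    have hb₁monic : b₁.Monic := by
      have := hb
      rw [← hbfac] at this
      exact (monic_X_sub_C r).of_mul_monic_left this
    have hb₁deg : b₁.natDegree = s := by
      have h1 : ((X - C r) * b₁).natDegree = 1 + b₁.natDegree := by
        rw [natDegree_mul (X_sub_C_ne_zero r) hb₁monic.ne_zero, natDegree_X_sub_C]
      rw [hbfac] at h1
      omega
    have hb₁roots : ∀ w : ℂ, b₁.IsRoot w → w ∈ E := by
      intro w hw
      apply hroots
      rw [← hbfac]
      simp [IsRoot, hw.eq_zero]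
    -- D has root r
    have hDr : D.IsRoot r := by
      have := heq r (hEV hrE)
      simp only [IsRoot]
      rw [this, hr.eq_zero, zero_mul]
    have hDfac : (X - C r) * (D /ₘ (X - C r)) = D := mul_divByMonic_eq_iff_isRoot.mpr hDr
    set D₁ := D /ₘ (X - C r) with hD₁def
    -- D₁ = b₁ * h on V
    have heq₁ : ∀ z ∈ V, D₁.eval z = b₁.eval z * h z := by
      have hoff : ∀ z ∈ V, z ≠ r → D₁.eval z = b₁.eval z * h z := by
        intro z hz hzr
        have h1 := heq z hz
        rw [← hDfac, ← hbfac] at h1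
        simp only [eval_mul, eval_sub, eval_X, eval_C] at h1
        have hz0 : z - r ≠ 0 := sub_ne_zero.mpr hzr
        exact mul_left_cancel₀ hz0 (by linear_combination h1)
      intro z hz
      rcases eq_or_ne z r with rfl | hzr
      · exact aux_eq_at hV hz (Polynomial.continuousOn _) 
          ((Polynomial.continuousOn _).mul hcont) hoff
      · exact hoff z hz hzr
    have : b₁ ∣ D₁ := ih b₁ hb₁monic hb₁deg hb₁roots D₁ h hcont heq₁
    calc b = (X - C r) * b₁ := hbfac.symm
    _ ∣ (X - C r) * D₁ := mul_dvd_mul_left _ this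
    _ = D := hDfac

/-- Hermite interpolation of a holomorphic function at the roots of a monic polynomial. -/
lemma aux_interp {V : Set ℂ} (hV : IsOpen V) {E : Set ℂ} (hEV : E ⊆ V) :
    ∀ (s : ℕ) (b : ℂ[X]), b.Monic → b.natDegree = s → (∀ w : ℂ, b.IsRoot w → w ∈ E) →
    ∀ g : ℂ → ℂ, DifferentiableOn ℂ g V →
    ∃ (T : ℂ[X]) (h : ℂ → ℂ), T.degree < (s : ℕ) ∧ DifferentiableOn ℂ h V ∧
      ∀ z ∈ V, g z = T.eval z + b.eval z * h z := by
  intro s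
  induction s with
  | zero =>
    intro b hb hdeg _ g hg
    refine ⟨0, g, ?_, hg, ?_⟩
    · simp [degree_zero]
    · intro z _
      rw [hb.natDegree_eq_zero.mp hdeg]
      simp
  | succ s ih =>
    intro b hb hdeg hroots g hg
    obtain ⟨r, hr⟩ : ∃ z : ℂ, b.IsRoot z := by
      apply Complex.exists_root
      rw [degree_eq_natDegree hb.ne_zero, hdeg]
      exact_mod_cast Nat.succ_pos s
    have hrE : r ∈ E := hroots r hr
    have hrV : r ∈ V := hEV hrE
    have hbfac : (X - C r) * (b /ₘ (X - C r)) = b := mul_divByMonic_eq_iff_isRoot.mpr hr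
    set b₁ := b /ₘ (X - C r) with hb₁def
    have hb₁monic : b₁.Monic := by
      have := hb
      rw [← hbfac] at this
      exact (monic_X_sub_C r).of_mul_monic_left this
    have hb₁deg : b₁.natDegree = s := by
      have h1 : ((X - C r) * b₁).natDegree = 1 + b₁.natDegree := by
        rw [natDegree_mul (X_sub_C_ne_zero r) hb₁monic.ne_zero, natDegree_X_sub_C]
      rw [hbfac] at h1
      omega
    have hb₁roots : ∀ w : ℂ, b₁.IsRoot w → w ∈ E := by
      intro w hw
      apply hroots
      rw [← hbfac]
      simp [IsRoot, hw.eq_zero]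
    -- use dslope
    have hg₁ : DifferentiableOn ℂ (dslope g r) V :=
      (Complex.differentiableOn_dslope (hV.mem_nhds hrV)).mpr hg
    obtain ⟨T₁, h, hT₁deg, hh, hT₁⟩ := ih b₁ hb₁monic hb₁deg hb₁roots (dslope g r) hg₁
    refine ⟨C (g r) + (X - C r) * T₁, h, ?_, hh, ?_⟩
    · apply lt_of_le_of_lt (degree_add_le _ _)
      rw [max_lt_iff]
      constructor
      · apply lt_of_le_of_lt degree_C_le
        exact_mod_cast WithBot.coe_lt_coe.mpr (Nat.succ_pos s)
      · apply lt_of_le_of_lt (degree_mul_le _ _)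
        rcases eq_or_ne T₁ 0 with rfl | hT₁0
        · simp
        · rw [degree_X_sub_C, degree_eq_natDegree hT₁0]
          rw [degree_eq_natDegree hT₁0] at hT₁deg
          have : T₁.natDegree < s := by exact_mod_cast hT₁deg
          exact_mod_cast by omega
    · intro z hz
      have hds : g z = g r + (z - r) * dslope g r z := by
        rcases eq_or_ne z r with rfl | hzr
        · simp
        · have hz0 : z - r ≠ 0 := sub_ne_zero.mpr hzr
          rw [dslope_of_ne g hzr, slope_def_field]
          field_simp
          ring
      have h1 := hT₁ z hz
      rw [← hbfac]
      simp only [eval_add, eval_mul, eval_sub, eval_X, eval_C]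
      rw [hds, h1]
      ring

/-- Uniqueness of the interpolant. -/
lemma aux_unique {E : Set ℂ} {V₁ V₂ : Set ℂ} (hV₁ : IsOpen V₁) (hV₂ : IsOpen V₂)
    (hEV₁ : E ⊆ V₁) (hEV₂ : E ⊆ V₂)
    {b : ℂ[X]} (hb : b.Monic) (hroots : ∀ w : ℂ, b.IsRoot w → w ∈ E)
    {g : ℂ → ℂ} {T₁ T₂ : ℂ[X]} {h₁ h₂ : ℂ → ℂ}
    (hd₁ : T₁.degree < b.degree) (hd₂ : T₂.degree < b.degree)
    (hh₁ : ContinuousOn h₁ V₁) (hh₂ : ContinuousOn h₂ V₂)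
    (he₁ : ∀ z ∈ V₁, g z = T₁.eval z + b.eval z * h₁ z)
    (he₂ : ∀ z ∈ V₂, g z = T₂.eval z + b.eval z * h₂ z) : T₁ = T₂ := by
  have hdvd : b ∣ (T₁ - T₂) := by
    apply aux_dvd (hV₁.inter hV₂) (Set.subset_inter hEV₁ hEV₂) b.natDegree b hb rfl hroots
      (T₁ - T₂) (fun z => h₂ z - h₁ z)
      ((hh₂.mono Set.inter_subset_right).sub (hh₁.mono Set.inter_subset_left))
    intro z hz
    have e1 := he₁ z hz.1
    have e2 := he₂ z hz.2
    simp only [eval_sub]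
    rw [e1] at e2
    linear_combination e2
  have : T₁ - T₂ = 0 := by
    apply eq_zero_of_dvd_of_degree_lt hdvd
    apply lt_of_le_of_lt (degree_sub_le _ _)
    exact max_lt hd₁ hd₂
  exact sub_eq_zero.mp this


/-- `Q` is a denominator of a multipoint Hermite–Padé approximant of the system
`f = (f₁,…,f_d)` (holomorphic on the open set `U ⊇ E`) with respect to the multi-index `m`
and the interpolation polynomials `a` (with `a (n+1)` monic of degree `n+1` and zeros in
`E`): `Q ≢ 0`, `deg Q ≤ |m|`, and for each `k` there is `P_k` with `deg P_k ≤ n − m_k`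
such that `(Q f_k − P_k)/a_{n+1}` is holomorphic on a neighborhood of `E`. -/
def IsMHPDenominator (E U : Set ℂ) (d : ℕ) (f : Fin d → ℂ → ℂ) (m : Fin d → ℕ)
    (a : ℕ → ℂ[X]) (n : ℕ) (Q : ℂ[X]) : Prop :=
  Q ≠ 0 ∧ Q.natDegree ≤ ∑ k, m k ∧
    ∀ k : Fin d, ∃ P : ℂ[X], P.degree ≤ (n - m k : ℕ) ∧
      ∃ V : Set ℂ, IsOpen V ∧ E ⊆ V ∧ V ⊆ U ∧
        ∃ g : ℂ → ℂ, DifferentiableOn ℂ g V ∧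
          ∀ z ∈ V, Q.eval z * f k z - P.eval z = (a (n+1)).eval z * g z

/-- Lemma 2.  If for all `n ≥ n₀` the monic common denominator `Q_{n,m}` of the multipoint
Hermite–Padé approximants of `f` is unique and has degree exactly `|m|`, then `f` is
polynomially independent with respect to `m`. -/
theorem stmt12 (E : Set ℂ) (hE : IsCompact E) (hEconn : IsConnected E)
    (hEc : IsConnected Eᶜ)
    (U : Set ℂ) (hU : IsOpen U) (hEU : E ⊆ U)
    (d : ℕ) (f : Fin d → ℂ → ℂ) (hf : ∀ k, DifferentiableOn ℂ (f k) U)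
    (m : Fin d → ℕ) (hm : ∀ k, 0 < m k)
    (a : ℕ → ℂ[X]) (haM : ∀ n, (a n).Monic) (hadeg : ∀ n, (a n).natDegree = n)
    (haroots : ∀ n, ∀ w : ℂ, (a n).IsRoot w → w ∈ E)
    (n₀ : ℕ)
    (huniq : ∀ n ≥ n₀, ∃ Q : ℂ[X], Q.Monic ∧ Q.natDegree = ∑ k, m k ∧
      IsMHPDenominator E U d f m a n Q ∧
      ∀ Q' : ℂ[X], Q'.Monic → IsMHPDenominator E U d f m a n Q' → Q' = Q) :
    ¬ ∃ p : Fin d → ℂ[X], (∃ k, p k ≠ 0) ∧ (∀ k, (p k).degree < (m k : ℕ)) ∧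
      ∃ P : ℂ[X], ∀ z ∈ U, ∑ k, (p k).eval z * f k z = P.eval z := by
  rintro ⟨p, ⟨j, hpj⟩, hpdeg, P, hPrel⟩
  set M := ∑ k, m k with hM
  set n := max n₀ (M + P.natDegree + 1) with hn
  have hn0 : n ≥ n₀ := le_max_left _ _
  have hnM : M + P.natDegree + 1 ≤ n := le_max_right _ _
  have hmk_le : ∀ k, m k ≤ M := fun k =>
    Finset.single_le_sum (f := fun k => m k) (fun _ _ => Nat.zero_le _) (Finset.mem_univ k)
  have hmkn : ∀ k, m k ≤ n := fun k => le_trans (hmk_le k) (by omega)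
  obtain ⟨Q, hQmon, hQdeg, hQden, hQuniq⟩ := huniq n hn0
  set b := a (n+1) with hbdef
  have hbmon : b.Monic := haM _
  have hbdeg : b.natDegree = n + 1 := hadeg _
  have hbroots : ∀ w, b.IsRoot w → w ∈ E := haroots _
  have hbdegw : b.degree = ((n+1 : ℕ) : WithBot ℕ) := by
    rw [degree_eq_natDegree hbmon.ne_zero, hbdeg]
  -- the interpolation operator T
  have hTex : ∀ (k : Fin d) (q : ℂ[X]), ∃ (T : ℂ[X]) (h : ℂ → ℂ),
      T.degree < ((n+1 : ℕ) : WithBot ℕ) ∧ DifferentiableOn ℂ h U ∧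
      ∀ z ∈ U, q.eval z * f k z = T.eval z + b.eval z * h z := by
    intro k q
    exact aux_interp hU hEU (n+1) b hbmon hbdeg hbroots
      (fun z => q.eval z * f k z)
      ((q.differentiable.differentiableOn).mul (hf k))
  choose T Th hTdeg hThdiff hTeq using hTex
  -- uniqueness of the interpolant
  have hTuniq : ∀ (k : Fin d) (q T' : ℂ[X]) (h' : ℂ → ℂ) (V : Set ℂ), IsOpen V → E ⊆ V →
      T'.degree < ((n+1:ℕ) : WithBot ℕ) → DifferentiableOn ℂ h' V →
      (∀ z ∈ V, q.eval z * f k z = T'.eval z + b.eval z * h' z) → T k q = T' := by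
    intro k q T' h' V hVo hEV hd hh' he'
    exact aux_unique hU hVo hEU hEV hbmon hbroots (g := fun z => q.eval z * f k z)
      (by rw [hbdegw]; exact hTdeg k q) (by rw [hbdegw]; exact hd)
      ((hThdiff k q).continuousOn) (hh'.continuousOn) (hTeq k q) he'
  have hTadd : ∀ (k : Fin d) (q₁ q₂ : ℂ[X]), T k (q₁ + q₂) = T k q₁ + T k q₂ := by
    intro k q₁ q₂
    apply hTuniq k (q₁ + q₂) _ (fun z => Th k q₁ z + Th k q₂ z) U hU hEU
    · apply lt_of_le_of_lt (degree_add_le _ _)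
      exact max_lt (hTdeg k q₁) (hTdeg k q₂)
    · exact (hThdiff k q₁).add (hThdiff k q₂)
    · intro z hz
      have e1 := hTeq k q₁ z hz
      have e2 := hTeq k q₂ z hz
      simp only [eval_add]
      linear_combination e1 + e2
  have hTsmul : ∀ (k : Fin d) (c : ℂ) (q : ℂ[X]), T k (c • q) = c • T k q := by
    intro k c q
    apply hTuniq k (c • q) _ (fun z => c * Th k q z) U hU hEU
    · apply lt_of_le_of_lt (degree_smul_le _ _)
      exact hTdeg k q
    · exact (hThdiff k q).const_mul c
    · intro z hz
      have e1 := hTeq k q z hz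
      simp only [eval_smul, smul_eq_mul]
      linear_combination c * e1
  -- the linear map L
  let ι := (k : Fin d) × Fin (m k)
  let L : degreeLT ℂ (M+1) →ₗ[ℂ] (ι → ℂ) :=
    { toFun := fun q s => (T s.1 q.1).coeff (n - m s.1 + 1 + s.2)
      map_add' := by
        intro q₁ q₂
        funext s
        simp [hTadd]
      map_smul' := by
        intro c q
        funext s
        simp [hTsmul] }
  -- the linear functional lam
  let Phat : (ι → ℂ) → ℂ[X] := fun c =>
    ∑ k, p k * (∑ i : Fin (m k), C (c ⟨k, i⟩) * X ^ (n - m k + 1 + i))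
  have hPhat_add : ∀ c₁ c₂, Phat (c₁ + c₂) = Phat c₁ + Phat c₂ := by
    intro c₁ c₂
    simp only [Phat, Pi.add_apply, map_add, add_mul, mul_add, Finset.sum_add_distrib]
  have hPhat_smul : ∀ (t : ℂ) (c), Phat (t • c) = t • Phat c := by
    intro t c
    simp only [Phat, Pi.smul_apply, smul_eq_mul, map_mul, smul_eq_C_mul, Finset.mul_sum]
    refine Finset.sum_congr rfl fun k _ => ?_
    refine Finset.sum_congr rfl fun i _ => ?_
    ring
  let lam : (ι → ℂ) →ₗ[ℂ] ℂ :=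
    { toFun := fun c => ((Phat c) %ₘ b).coeff n
      map_add' := by
        intro c₁ c₂
        simp only [hPhat_add, add_modByMonic, coeff_add]
      map_smul' := by
        intro t c
        simp only [hPhat_smul, smul_modByMonic, coeff_smul, smul_eq_mul, RingHom.id_apply] }
  -- membership of Q
  have hQmem : Q ∈ degreeLT ℂ (M+1) := by
    rw [mem_degreeLT]
    apply lt_of_le_of_lt degree_le_natDegree
    rw [hQdeg]
    exact_mod_cast Nat.lt_succ_self M
  set Qel : degreeLT ℂ (M+1) := ⟨Q, hQmem⟩ with hQel
  -- a nonzero element of the kernel is a denominator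
  have hker_den : ∀ S : degreeLT ℂ (M+1), L S = 0 → (S : ℂ[X]) ≠ 0 →
      IsMHPDenominator E U d f m a n (S : ℂ[X]) := by
    intro S hLS hS0
    refine ⟨hS0, ?_, ?_⟩
    · have : (S : ℂ[X]).degree < ((M+1 : ℕ) : WithBot ℕ) := mem_degreeLT.mp S.2
      rw [← natDegree_lt_iff_degree_lt hS0] at this
      omega
    · intro k
      refine ⟨T k S, ?_, U, hU, hEU, subset_rfl, Th k S, hThdiff k S, ?_⟩
      · rw [degree_le_iff_coeff_zero]
        intro j hj
        rw [Nat.cast_lt] at hj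
        by_cases hjn : j ≤ n
        · have hij : j = n - m k + 1 + (j - (n - m k + 1)) := by omega
          have hival : j - (n - m k + 1) < m k := by
            have := hmkn k
            omega
          have := congrFun hLS ⟨k, ⟨j - (n - m k + 1), hival⟩⟩
          simp only [Pi.zero_apply] at this
          rw [hij]
          exact this
        · apply coeff_eq_zero_of_degree_lt
          apply lt_of_lt_of_le (hTdeg k S)
          exact_mod_cast by omega
      · intro z hz
        have := hTeq k S z hz
        linear_combination this
  -- Q is in the kernel
  have hQker : L Qel = 0 := by
    funext s
    obtain ⟨k, i⟩ := s
    obtain ⟨Pk, hPkdeg, V, hVo, hEV, hVU, g, hg, hgeq⟩ := hQden.2.2 k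
    have hTQ : T k Q = Pk := by
      apply hTuniq k Q Pk g V hVo hEV
      · apply lt_of_le_of_lt hPkdeg
        rw [Nat.cast_lt]
        omega
      · exact hg
      · intro z hz
        have := hgeq z hz
        linear_combination this
    show (T k Q).coeff (n - m k + 1 + i) = 0
    rw [hTQ]
    apply coeff_eq_zero_of_degree_lt
    apply lt_of_le_of_lt hPkdeg
    rw [Nat.cast_lt]
    omega
  -- the range of L lies in the kernel of lam
  have hrange : LinearMap.range L ≤ LinearMap.ker lam := by
    rintro x ⟨q, rfl⟩
    rw [LinearMap.mem_ker]
    show ((Phat (L q)) %ₘ b).coeff n = 0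
    set qq : ℂ[X] := (q : ℂ[X]) with hqq
    set low : Fin d → ℂ[X] := fun k =>
      T k qq - ∑ i : Fin (m k), C ((T k qq).coeff (n - m k + 1 + i)) * X ^ (n - m k + 1 + i)
      with hlowdef
    -- coefficient of the hat sum
    have hsumcoeff : ∀ (k : Fin d) (jj : ℕ), n - m k + 1 ≤ jj → jj ≤ n →
        (∑ i : Fin (m k), C ((T k qq).coeff (n - m k + 1 + i)) * X ^ (n - m k + 1 + i)).coeff jj
          = (T k qq).coeff jj := by
      intro k jj h1 h2
      have hival : jj - (n - m k + 1) < m k := by have := hmkn k; omega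
      rw [finset_sum_coeff]
      rw [Finset.sum_eq_single (⟨jj - (n - m k + 1), hival⟩ : Fin (m k))]
      · simp only [coeff_C_mul, coeff_X_pow]
        have he : n - m k + 1 + (jj - (n - m k + 1)) = jj := by omega
        rw [he, if_pos rfl, mul_one]
      · intro i _ hi
        simp only [coeff_C_mul, coeff_X_pow]
        rw [if_neg, mul_zero]
        intro hjj
        apply hi
        apply Fin.ext
        simp only []
        omega
      · intro h; exact absurd (Finset.mem_univ _) h
    have hhatdeg : ∀ k : Fin d,
        (∑ i : Fin (m k), C ((T k qq).coeff (n - m k + 1 + i)) * X ^ (n - m k + 1 + i)).degree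
          ≤ (n : WithBot ℕ) := by
      intro k
      apply le_trans (degree_sum_le _ _)
      rw [Finset.sup_le_iff]
      intro i _
      apply le_trans (degree_mul_le _ _)
      rw [degree_X_pow]
      apply le_trans (add_le_add_left degree_C_le _)
      rw [zero_add, Nat.cast_le]
      have := hmkn k
      have := i.isLt
      omega
    -- degree of low
    have hlowdeg : ∀ k : Fin d, (low k).degree ≤ ((n - m k : ℕ) : WithBot ℕ) := by
      intro k
      rw [degree_le_iff_coeff_zero]
      intro jj hjj
      rw [Nat.cast_lt] at hjj
      rw [hlowdef]
      simp only [coeff_sub]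
      by_cases hjn : jj ≤ n
      · rw [hsumcoeff k jj (by omega) hjn, sub_self]
      · rw [sub_eq_zero]
        rw [coeff_eq_zero_of_degree_lt (lt_of_lt_of_le (hTdeg k qq) (by exact_mod_cast by omega)),
          coeff_eq_zero_of_degree_lt (lt_of_le_of_lt (hhatdeg k) (by exact_mod_cast by omega))]
    -- decomposition of Phat (L q)
    have hdecomp : Phat (L q) = (∑ k, p k * T k qq) - ∑ k, p k * low k := by
      rw [← Finset.sum_sub_distrib]
      refine Finset.sum_congr rfl fun k _ => ?_
      have hLq : ∀ i : Fin (m k), L q ⟨k, i⟩ = (T k qq).coeff (n - m k + 1 + i) :=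
        fun i => rfl
      simp only [hLq, hlowdef]
      ring
    -- divisibility
    have hD : b ∣ ((∑ k, p k * T k qq) - qq * P) := by
      apply aux_dvd hU hEU (n+1) b hbmon hbdeg hbroots _
        (fun z => - ∑ k, (p k).eval z * Th k qq z)
      · apply ContinuousOn.neg
        apply continuousOn_finset_sum
        intro k _
        exact ((p k).continuousOn).mul (hThdiff k qq).continuousOn
      · intro z hz
        have h1 : ∑ k, (p k).eval z * (T k qq).eval z
            = qq.eval z * P.eval z - b.eval z * ∑ k, (p k).eval z * Th k qq z := by
          rw [← hPrel z hz, Finset.mul_sum, Finset.mul_sum, ← Finset.sum_sub_distrib]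
          refine Finset.sum_congr rfl fun k _ => ?_
          linear_combination -(p k).eval z * (hTeq k qq z hz)
        simp only [eval_sub, eval_mul, eval_finset_sum]
        linear_combination h1
    -- modByMonic computation
    have hmod : (∑ k, p k * T k qq) %ₘ b = (qq * P) %ₘ b := by
      have h2 := map_sub (modByMonicHom b) (∑ k, p k * T k qq) (qq * P)
      simp only [modByMonicHom_apply] at h2
      rw [← sub_eq_zero, ← h2]
      exact (modByMonic_eq_zero_iff_dvd hbmon).mpr hD
    have hqdeg : qq.natDegree ≤ M := by
      rcases eq_or_ne qq 0 with h | h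
      · simp [h]
      · have : qq.degree < ((M+1 : ℕ) : WithBot ℕ) := mem_degreeLT.mp q.2
        rw [← natDegree_lt_iff_degree_lt h] at this
        omega
    have hqPdeg : (qq * P).degree < ((n : ℕ) : WithBot ℕ) := by
      rcases eq_or_ne (qq * P) 0 with h | h
      · rw [h, degree_zero]; exact_mod_cast WithBot.bot_lt_coe n
      · rw [← natDegree_lt_iff_degree_lt h]
        have := natDegree_mul_le (p := qq) (q := P)
        omega
    have hqPmod : (qq * P) %ₘ b = qq * P := by
      apply (modByMonic_eq_self_iff hbmon).mpr
      rw [hbdegw]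
      exact lt_trans hqPdeg (by exact_mod_cast by omega)
    -- low sum degree
    have hlowsumdeg : (∑ k, p k * low k).degree < ((n : ℕ) : WithBot ℕ) := by
      apply lt_of_le_of_lt (degree_sum_le _ _)
      rw [Finset.sup_lt_iff (by exact_mod_cast WithBot.bot_lt_coe n)]
      intro k _
      rcases eq_or_ne (p k * low k) 0 with h | h
      · rw [h, degree_zero]; exact_mod_cast WithBot.bot_lt_coe n
      · have hp0 : p k ≠ 0 := left_ne_zero_of_mul h
        have hl0 : low k ≠ 0 := right_ne_zero_of_mul h
        rw [← natDegree_lt_iff_degree_lt h]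
        have h1 : (p k).natDegree < m k := (natDegree_lt_iff_degree_lt hp0).mpr (hpdeg k)
        have h2 : (low k).natDegree ≤ n - m k := natDegree_le_iff_degree_le.mpr (hlowdeg k)
        have h3 := natDegree_mul_le (p := p k) (q := low k)
        have := hmkn k
        omega
    have hlowsummod : (∑ k, p k * low k) %ₘ b = ∑ k, p k * low k := by
      apply (modByMonic_eq_self_iff hbmon).mpr
      rw [hbdegw]
      exact lt_trans hlowsumdeg (by exact_mod_cast by omega)
    -- put it together
    rw [hdecomp]
    have hfin : (((∑ k, p k * T k qq) - ∑ k, p k * low k) %ₘ b)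
        = qq * P - ∑ k, p k * low k := by
      have h2 := map_sub (modByMonicHom b) (∑ k, p k * T k qq) (∑ k, p k * low k)
      simp only [modByMonicHom_apply] at h2
      rw [h2, hmod, hqPmod, hlowsummod]
    rw [hfin, coeff_sub, coeff_eq_zero_of_degree_lt hqPdeg,
      coeff_eq_zero_of_degree_lt hlowsumdeg, sub_self]
  -- lam is nonzero
  have hlam0 : lam ≠ 0 := by
    have hdpj : (p j).natDegree < m j := (natDegree_lt_iff_degree_lt hpj).mpr (hpdeg j)
    set dp := (p j).natDegree with hdp
    set i₀ : Fin (m j) := ⟨m j - 1 - dp, by omega⟩ with hi₀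
    set c₀ : ι → ℂ := fun s => if s = (⟨j, i₀⟩ : ι) then (1:ℂ) else 0 with hc₀
    have hPc₀ : Phat c₀ = p j * X ^ (n - dp) := by
      simp only [Phat]
      rw [Finset.sum_eq_single j]
      · congr 1
        rw [Finset.sum_eq_single i₀]
        · simp only [hc₀, if_pos rfl, map_one, one_mul]
          congr 1
          have := hmkn j
          have hi : (i₀ : ℕ) = m j - 1 - dp := rfl
          have hdpj' : dp < m j := hdpj
          rw [hi]
          generalize n = N at *
          omega
        · intro i _ hi
          have hne : (⟨j, i⟩ : ι) ≠ ⟨j, i₀⟩ := by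
            intro h
            exact hi (by
              have := (Sigma.mk.inj_iff.mp h).2
              exact eq_of_heq this)
          simp only [hc₀, if_neg hne, map_zero, zero_mul]
        · intro h; exact absurd (Finset.mem_univ _) h
      · intro k _ hk
        have : ∀ i : Fin (m k), c₀ ⟨k, i⟩ = 0 := by
          intro i
          have hne : (⟨k, i⟩ : ι) ≠ ⟨j, i₀⟩ := by
            intro h
            exact hk (Sigma.mk.inj_iff.mp h).1
          simp only [hc₀, if_neg hne]
        rw [Finset.sum_eq_zero (fun i _ => by rw [this i, map_zero, zero_mul]), mul_zero]
      · intro h; exact absurd (Finset.mem_univ _) h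
    have hdlt : (p j * X ^ (n - dp)).degree < b.degree := by
      rw [hbdegw, degree_mul, degree_X_pow, degree_eq_natDegree hpj, ← hdp]
      have hdpn : dp + (n - dp) = n := by
        have := hmkn j
        omega
      rw [← Nat.cast_add, hdpn, Nat.cast_lt]
      omega
    have hlamc₀ : lam c₀ = (p j).leadingCoeff := by
      show ((Phat c₀) %ₘ b).coeff n = _
      rw [hPc₀, (modByMonic_eq_self_iff hbmon).mpr hdlt, coeff_mul_X_pow']
      have h1 : n - dp ≤ n := Nat.sub_le n dp
      rw [if_pos h1]
      have h2 : n - (n - dp) = dp := by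
        have := hmkn j
        omega
      rw [h2, hdp]
      rfl
    intro h
    have := hlamc₀
    rw [h] at this
    simp only [LinearMap.zero_apply] at this
    exact (leadingCoeff_ne_zero.mpr hpj) this.symm
  -- dimension count
  haveI : FiniteDimensional ℂ (degreeLT ℂ (M+1)) :=
    Module.Finite.equiv (degreeLTEquiv ℂ (M+1)).symm
  have hcard : Fintype.card ι = M := by
    rw [Fintype.card_sigma]
    simp [hM]
  have hfullrank : Module.finrank ℂ (degreeLT ℂ (M+1)) = M + 1 := by
    rw [(degreeLTEquiv ℂ (M+1)).finrank_eq, Module.finrank_fin_fun]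
  have hcodrank : Module.finrank ℂ (ι → ℂ) = M := by
    rw [Module.finrank_pi, hcard]
  have hkerlam_lt : Module.finrank ℂ (LinearMap.ker lam) < M := by
    rw [← hcodrank]
    apply Submodule.finrank_lt
    intro htop
    exact hlam0 (LinearMap.ker_eq_top.mp htop)
  have hrank := LinearMap.finrank_range_add_finrank_ker L
  rw [hfullrank] at hrank
  have hrangele : Module.finrank ℂ (LinearMap.range L) ≤
      Module.finrank ℂ (LinearMap.ker lam) := Submodule.finrank_mono hrange
  have hker2 : 2 ≤ Module.finrank ℂ (LinearMap.ker L) := by omega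
  -- get an element of the kernel outside the span of Q
  have hQel0 : Qel ≠ 0 := by
    intro h
    exact hQden.1 (by simpa [hQel] using congrArg (Subtype.val) h)
  obtain ⟨R, hRker, hRspan⟩ : ∃ R, R ∈ LinearMap.ker L ∧ R ∉ Submodule.span ℂ {Qel} := by
    by_contra hcon
    push_neg at hcon
    have hle : LinearMap.ker L ≤ Submodule.span ℂ {Qel} := fun x hx => hcon x hx
    have := Submodule.finrank_mono (M := degreeLT ℂ (M+1)) hle
    rw [finrank_span_singleton hQel0] at this
    omega
  -- construct a second monic denominator
  have hQelker : Qel ∈ LinearMap.ker L := LinearMap.mem_ker.mpr hQker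
  set c : ℂ := ((R : degreeLT ℂ (M+1)) : ℂ[X]).coeff M with hc
  set S : degreeLT ℂ (M+1) := R - c • Qel with hS
  have hSker : S ∈ LinearMap.ker L := by
    apply Submodule.sub_mem _ hRker
    exact Submodule.smul_mem _ _ hQelker
  have hS0 : S ≠ 0 := by
    intro h
    apply hRspan
    have : R = c • Qel := by
      have := sub_eq_zero.mp h
      simpa [hS] using this
    rw [this]
    exact Submodule.smul_mem _ _ (Submodule.mem_span_singleton_self Qel)
  have hSpoly0 : ((S : degreeLT ℂ (M+1)) : ℂ[X]) ≠ 0 := by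
    intro h
    exact hS0 (Subtype.ext h)
  have hQcoeffM : Q.coeff M = 1 := by
    have := hQmon.coeff_natDegree
    rwa [hQdeg] at this
  have hScoeffM : ((S : degreeLT ℂ (M+1)) : ℂ[X]).coeff M = 0 := by
    have : ((S : degreeLT ℂ (M+1)) : ℂ[X]) = (R : ℂ[X]) - c • Q := rfl
    rw [this, coeff_sub, coeff_smul, hQcoeffM]
    simp [hc]
  set Q' : ℂ[X] := Q + (S : ℂ[X]) with hQ'
  have hQ'el : Q' ∈ degreeLT ℂ (M+1) := Submodule.add_mem _ hQmem S.2
  have hQ'coeff : Q'.coeff M = 1 := by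
    rw [hQ', coeff_add, hQcoeffM, hScoeffM, add_zero]
  have hQ'deg : Q'.natDegree = M := by
    have h1 : Q'.natDegree ≤ M := by
      have : Q'.degree < ((M+1 : ℕ) : WithBot ℕ) := mem_degreeLT.mp hQ'el
      have h0 : Q' ≠ 0 := fun h => by simp [h] at hQ'coeff
      rw [← natDegree_lt_iff_degree_lt h0] at this
      omega
    have h2 : M ≤ Q'.natDegree := le_natDegree_of_ne_zero (by rw [hQ'coeff]; exact one_ne_zero)
    omega
  have hQ'mon : Q'.Monic := by
    unfold Polynomial.Monic Polynomial.leadingCoeff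
    rw [hQ'deg, hQ'coeff]
  have hQ'den : IsMHPDenominator E U d f m a n Q' := by
    have hmem : L (Qel + S) = 0 := by
      rw [map_add, hQker, LinearMap.mem_ker.mp hSker, add_zero]
    have := hker_den (Qel + S) hmem (by
      show ((Qel + S : degreeLT ℂ (M+1)) : ℂ[X]) ≠ 0
      intro h
      have hh : Q + ((S : degreeLT ℂ (M+1)) : ℂ[X]) = 0 := h
      rw [← hQ'] at hh
      exact (by simp [hh] at hQ'coeff : False))
    convert this using 1
    exact rfl
  have := hQuniq Q' hQ'mon hQ'den
  apply hSpoly0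
  have : (S : ℂ[X]) = Q' - Q := by rw [hQ']; ring
  rw [this, sub_eq_zero]
  exact hQuniq Q' hQ'mon hQ'den
end

section
/- Suppose F(w) = Σ_{n=−∞}^{∞} F_n w^n is a Laurent series convergent in |w| > 1, and write F = F₁ + F₂ with F₁(w) = Σ_{n≥0} F_n w^n having infinite radius of convergence. Suppose α_n (n ≥ 1) are holomorphic in the exterior of some disk (including ∞), converge there to α with α(∞) ≠ 0, and [F₁ α_n]_{n−m} = 0 for all sufficiently large n and a fixed m. Then F₁ is a polynomial. -/
open Filter

open Metric

lemma cauchy_est15 {f : ℂ → ℂ} {r' M : ℝ} (hr' : 0 < r')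
    (hf : DifferentiableOn ℂ f (closedBall 0 r'))
    (hM : ∀ x ∈ sphere (0:ℂ) r', ‖f x‖ ≤ M) (p : ℕ) :
    ‖iteratedDeriv p f 0‖ ≤ p.factorial * M / r' ^ p := by
  lift r' to NNReal using hr'.le with R hR
  have hR0 : 0 < R := by exact_mod_cast hr'
  have hp : HasFPowerSeriesOnBall f (cauchyPowerSeries f 0 R) 0 R :=
    hf.hasFPowerSeriesOnBall hR0
  have h1 : iteratedDeriv p f 0 = iteratedFDeriv ℂ p f 0 (fun _ => 1) := by
    rw [iteratedDeriv_eq_iteratedFDeriv]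
  have h2 := hp.factorial_smul 1 p
  have h3 : ‖cauchyPowerSeries f 0 R p (fun _ => (1:ℂ))‖ ≤ ‖cauchyPowerSeries f 0 R p‖ := by
    have := (cauchyPowerSeries f 0 R p).le_opNorm (fun _ => (1:ℂ))
    simpa using this
  have hcont : Continuous fun θ : ℝ => ‖f (circleMap 0 R θ)‖ := by
    apply Continuous.norm
    apply ContinuousOn.comp_continuous hf.continuousOn (continuous_circleMap 0 R)
    intro θ
    exact sphere_subset_closedBall (circleMap_mem_sphere 0 (by exact_mod_cast hr'.le) θ)
  have hint : (∫ θ : ℝ in (0)..2 * Real.pi, ‖f (circleMap 0 R θ)‖) ≤ 2 * Real.pi * M := by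
    have := intervalIntegral.integral_mono_on (a := 0) (b := 2 * Real.pi)
      Real.two_pi_pos.le (hcont.intervalIntegrable 0 (2 * Real.pi))
      (intervalIntegrable_const (c := M) (μ := MeasureTheory.volume))
      (fun θ _ => hM _ (circleMap_mem_sphere 0 (by exact_mod_cast hr'.le) θ))
    simpa [mul_comm] using this
  have h4 := norm_cauchyPowerSeries_le f 0 R p
  have hM0 : 0 ≤ M := le_trans (norm_nonneg _)
      (hM (circleMap 0 R 0) (circleMap_mem_sphere 0 (by exact_mod_cast hr'.le) 0))
  have h5 : ‖cauchyPowerSeries f 0 R p‖ ≤ M / (R:ℝ) ^ p := by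
    refine h4.trans ?_
    rw [abs_of_nonneg (by positivity : (0:ℝ) ≤ (R:ℝ))]
    rw [div_eq_mul_inv, ← inv_pow]
    apply mul_le_mul_of_nonneg_right _ (by positivity)
    calc (2 * Real.pi)⁻¹ * ∫ θ : ℝ in (0)..2 * Real.pi, ‖f (circleMap 0 R θ)‖
        ≤ (2 * Real.pi)⁻¹ * (2 * Real.pi * M) := by
          apply mul_le_mul_of_nonneg_left hint (by positivity)
      _ = M := by field_simp
  calc ‖iteratedDeriv p f 0‖
      = ‖(p.factorial : ℕ) • cauchyPowerSeries f 0 R p (fun _ => (1:ℂ))‖ := by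
        rw [h1, ← h2]
    _ = p.factorial * ‖cauchyPowerSeries f 0 R p (fun _ => (1:ℂ))‖ := by
        rw [← Nat.cast_smul_eq_nsmul ℝ, norm_smul]; simp
    _ ≤ p.factorial * (M / (R:ℝ) ^ p) := by
        apply mul_le_mul_of_nonneg_left (h3.trans h5) (by positivity)
    _ = p.factorial * M / (R:ℝ) ^ p := by ring


/-- Application of the Supplement to Buslaev's theorem.  `F = F₁ + F₂` is a Laurent series
convergent in `|w| > 1`, where `F₁(w) = Σ_{k≥0} F_k w^k` has infinite radius of
convergence (`HasSum` for every `w`).  The functions `α_n`, holomorphic in the exterior of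
some disk including `∞`, are modeled by `g_n(v) = α_n(1/v)` holomorphic on the ball
`B(0,r)`, with Taylor coefficients `α_{n,-p} = g_n^{(p)}(0)/p!`; they converge locally
uniformly to `g` (i.e. to `α`) with `α(∞) = g(0) ≠ 0`.  If the pairing conditions
`[F₁ α_n]_{n−m} = Σ_p α_{n,-p} F_{n−m+p} = 0` hold for all sufficiently large `n`,
then `F₁` is a polynomial. -/
theorem stmt15 (Fc : ℕ → ℂ) (F1 : ℂ → ℂ)
    (hF1 : ∀ z : ℂ, HasSum (fun k => Fc k * z ^ k) (F1 z))
    (F F2 : ℂ → ℂ)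
    (hF2 : DifferentiableOn ℂ F2 {w : ℂ | 1 < ‖w‖})
    (hF : ∀ w : ℂ, 1 < ‖w‖ → F w = F1 w + F2 w)
    (r : ℝ) (hr : 0 < r) (g : ℕ → ℂ → ℂ) (galpha : ℂ → ℂ)
    (hg : ∀ n, DifferentiableOn ℂ (g n) (Metric.ball (0:ℂ) r))
    (hconv : TendstoLocallyUniformlyOn g galpha atTop (Metric.ball (0:ℂ) r))
    (halpha : DifferentiableOn ℂ galpha (Metric.ball (0:ℂ) r))
    (hga0 : galpha 0 ≠ 0)
    (m N : ℕ) (hNm : m ≤ N)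
    (hpair : ∀ n ≥ N, HasSum
      (fun p : ℕ => (iteratedDeriv p (g n) 0 / (p.factorial : ℂ)) * Fc (n - m + p)) 0) :
    ∃ D : ℕ, ∀ k > D, Fc k = 0 := by
  by_contra hcon
  push_neg at hcon
  obtain ⟨r', hr'def⟩ : ∃ x : ℝ, x = r / 2 := ⟨_, rfl⟩
  have hr'0 : 0 < r' := by rw [hr'def]; positivity
  have hKsub : closedBall (0:ℂ) r' ⊆ ball 0 r := closedBall_subset_ball (by rw [hr'def]; linarith)
  have hU : TendstoUniformlyOn g galpha atTop (closedBall 0 r') :=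
    (tendstoLocallyUniformlyOn_iff_forall_isCompact isOpen_ball).mp hconv _ hKsub
      (isCompact_closedBall _ _)
  obtain ⟨C0, hC0⟩ := (isCompact_closedBall (0:ℂ) r').exists_bound_of_continuousOn
    (halpha.continuousOn.mono hKsub)
  obtain ⟨M, hMdef⟩ : ∃ x : ℝ, x = max C0 0 + 1 := ⟨_, rfl⟩
  have hM0 : 0 < M := by rw [hMdef]; positivity
  obtain ⟨c, hcdef⟩ : ∃ x : ℝ, x = ‖galpha 0‖ / 2 := ⟨_, rfl⟩
  have hc0 : 0 < c := by
    have := norm_pos_iff.mpr hga0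
    rw [hcdef]; positivity
  have h0mem : (0:ℂ) ∈ closedBall (0:ℂ) r' := mem_closedBall_self hr'0.le
  have hev1 : ∀ᶠ n in atTop, ∀ x ∈ closedBall (0:ℂ) r', ‖g n x‖ ≤ M := by
    filter_upwards [Metric.tendstoUniformlyOn_iff.mp hU 1 one_pos] with n hn x hx
    have h1 := hn x hx
    have h2 : ‖g n x‖ ≤ ‖galpha x‖ + dist (galpha x) (g n x) := by
      rw [dist_eq_norm]
      calc ‖g n x‖ = ‖galpha x - (galpha x - g n x)‖ := by ring_nf
        _ ≤ ‖galpha x‖ + ‖galpha x - g n x‖ := norm_sub_le _ _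
    have h3 : ‖galpha x‖ ≤ max C0 0 := le_trans (hC0 x hx) (le_max_left _ _)
    rw [hMdef]
    linarith
  have hev2 : ∀ᶠ n in atTop, c ≤ ‖g n 0‖ := by
    have ht : Tendsto (fun n => ‖g n 0‖) atTop (nhds ‖galpha 0‖) :=
      (hU.tendsto_at h0mem).norm
    have hlt : c < ‖galpha 0‖ := by
      have := norm_pos_iff.mpr hga0
      rw [hcdef]; linarith
    exact ht.eventually_const_le hlt
  obtain ⟨N₁, hN₁⟩ := eventually_atTop.mp ((hev1.and hev2).and (eventually_ge_atTop N))
  -- choose ε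
  obtain ⟨q, hqdef⟩ : ∃ x : ℝ, x = c / (2 * (M + c)) := ⟨_, rfl⟩
  have hq0 : 0 < q := by rw [hqdef]; positivity
  have hq2 : q ≤ 1 / 2 := by
    rw [hqdef, div_le_div_iff₀ (by positivity) (by norm_num)]
    nlinarith
  have hq1 : q < 1 := lt_of_le_of_lt hq2 (by norm_num)
  obtain ⟨ε, hεdef⟩ : ∃ x : ℝ, x = r' * q := ⟨_, rfl⟩
  have hε0 : 0 < ε := by rw [hεdef]; positivity
  have hεr' : ε / r' = q := by rw [hεdef]; field_simp
  have hkey : M * (q / (1 - q)) < c := by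
    have h1q : (1:ℝ) / 2 ≤ 1 - q := by linarith
    have h2q : q / (1 - q) ≤ 2 * q := by
      rw [div_le_iff₀ (by linarith)]
      nlinarith
    have : M * (2 * q) < c := by
      rw [hqdef]
      rw [show M * (2 * (c / (2 * (M + c)))) = M * c / (M + c) by field_simp]
      rw [div_lt_iff₀ (by positivity)]
      nlinarith
    nlinarith
  -- decay of Fc
  have hsummable := (hF1 ((2 / ε : ℝ) : ℂ)).summable
  have hterm : Tendsto (fun k => ‖Fc k‖ * (2 / ε) ^ k) atTop (nhds 0) := by
    have h1 := hsummable.tendsto_atTop_zero.norm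
    simp only [norm_zero] at h1
    convert h1 using 2 with k
    rw [norm_mul, norm_pow, Complex.norm_real, Real.norm_eq_abs,
      abs_of_pos (by positivity : (0:ℝ) < 2 / ε)]
  obtain ⟨C, hC⟩ : ∃ C, ∀ k, ‖Fc k‖ * (2 / ε) ^ k ≤ C := by
    obtain ⟨C, hC⟩ := hterm.bddAbove_range
    exact ⟨C, fun k => hC (Set.mem_range_self k)⟩
  obtain ⟨b, hbdef⟩ : ∃ x : ℕ → ℝ, x = fun k => ‖Fc k‖ * (ε⁻¹) ^ k := ⟨_, rfl⟩
  have hb0 : ∀ k, 0 ≤ b k := fun k => by rw [hbdef]; positivity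
  have hbC : ∀ k, b k ≤ C / 2 ^ k := by
    intro k
    have : b k = (‖Fc k‖ * (2 / ε) ^ k) / 2 ^ k := by
      rw [hbdef]
      field_simp
      ring
    rw [this]
    apply div_le_div_of_nonneg_right (hC k) (by positivity)
  have hbtend : Tendsto b atTop (nhds 0) := by
    apply squeeze_zero hb0 hbC
    have h2 : Tendsto (fun k : ℕ => (2:ℝ) ^ k) atTop atTop :=
      tendsto_pow_atTop_atTop_of_one_lt one_lt_two
    exact Tendsto.div_atTop tendsto_const_nhds h2
  -- choose the maximizing index
  obtain ⟨j₀, hj₀gt, hj₀ne⟩ := hcon N₁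
  have hbj₀ : 0 < b j₀ := by
    have := norm_pos_iff.mpr hj₀ne
    rw [hbdef]; positivity
  obtain ⟨J, hJ⟩ := eventually_atTop.mp (hbtend.eventually_lt_const hbj₀)
  obtain ⟨T, hTdef⟩ : ∃ x : Finset ℕ, x = (Finset.range J).filter (fun j => N₁ ≤ j ∧ b j₀ ≤ b j) := ⟨_, rfl⟩
  have hj₀T : j₀ ∈ T := by
    have hj₀J : j₀ < J := by
      by_contra h
      exact absurd (hJ j₀ (le_of_not_gt h)) (lt_irrefl _)
    rw [hTdef]
    exact Finset.mem_filter.mpr ⟨Finset.mem_range.mpr hj₀J, le_of_lt hj₀gt, le_refl _⟩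
  obtain ⟨k, hkT, hkmax⟩ := T.exists_max_image b ⟨j₀, hj₀T⟩
  rw [hTdef] at hkT hkmax
  have hkN₁ : N₁ ≤ k := (Finset.mem_filter.mp hkT).2.1
  have hbkj₀ : b j₀ ≤ b k := (Finset.mem_filter.mp hkT).2.2
  have hbk : 0 < b k := lt_of_lt_of_le hbj₀ hbkj₀
  have hmax : ∀ j, N₁ ≤ j → b j ≤ b k := by
    intro j hj
    by_cases hbig : b j₀ ≤ b j
    · have hjJ : j < J := by
        by_contra h
        exact absurd (hJ j (le_of_not_gt h)) (not_lt.mpr hbig)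
      exact hkmax j (Finset.mem_filter.mpr ⟨Finset.mem_range.mpr hjJ, hj, hbig⟩)
    · exact le_of_lt (lt_of_lt_of_le (not_le.mp hbig) hbkj₀)
  -- the key relation at n = k + m
  obtain ⟨n, hndef⟩ : ∃ x : ℕ, x = k + m := ⟨_, rfl⟩
  have hnN₁ : N₁ ≤ n := by rw [hndef]; exact le_trans hkN₁ (Nat.le_add_right _ _)
  obtain ⟨⟨hgM, hgc⟩, hnN⟩ := hN₁ n hnN₁
  have hdiffn : DifferentiableOn ℂ (g n) (closedBall 0 r') := (hg n).mono hKsub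
  have hαp : ∀ p : ℕ, ‖iteratedDeriv p (g n) 0 / (p.factorial : ℂ)‖ ≤ M / r' ^ p := by
    intro p
    have hce := cauchy_est15 hr'0 hdiffn
      (fun x hx => hgM x (sphere_subset_closedBall hx)) p
    rw [norm_div, Complex.norm_natCast]
    rw [div_le_iff₀ (by positivity : (0:ℝ) < (p.factorial : ℝ))]
    calc ‖iteratedDeriv p (g n) 0‖ ≤ p.factorial * M / r' ^ p := hce
      _ = M / r' ^ p * p.factorial := by ring
  have hFb : ∀ j, ‖Fc j‖ = b j * ε ^ j := by
    intro j
    rw [hbdef]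
    field_simp
    rw [mul_assoc, ← mul_pow, one_div, inv_mul_cancel₀ hε0.ne', one_pow, mul_one]
  have hs := hpair n hnN
  have hnm : n - m = k := by rw [hndef]; omega
  rw [hnm] at hs
  obtain ⟨f, hfdef⟩ : ∃ x : ℕ → ℂ, x = fun p => (iteratedDeriv p (g n) 0 / (p.factorial : ℂ)) * Fc (k + p) := ⟨_, rfl⟩
  rw [← hfdef] at hs
  -- bound on tail terms
  have hbound : ∀ p : ℕ, ‖f (p + 1)‖ ≤ M * b k * ε ^ k * q ^ (p + 1) := by
    intro p
    rw [hfdef]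
    simp only [norm_mul]
    calc ‖iteratedDeriv (p+1) (g n) 0 / ((p+1).factorial : ℂ)‖ * ‖Fc (k + (p+1))‖
        ≤ (M / r' ^ (p+1)) * (b (k + (p+1)) * ε ^ (k + (p+1))) := by
          apply mul_le_mul (hαp (p+1)) (le_of_eq (hFb _)) (norm_nonneg _) (by positivity)
      _ ≤ (M / r' ^ (p+1)) * (b k * ε ^ (k + (p+1))) := by
          apply mul_le_mul_of_nonneg_left _ (by positivity)
          apply mul_le_mul_of_nonneg_right
            (hmax _ (le_trans hkN₁ (Nat.le_add_right _ _))) (by positivity)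
      _ = M * b k * ε ^ k * q ^ (p + 1) := by
          rw [← hεr', pow_add, div_pow]
          ring
  have hgeo : Summable (fun p : ℕ => M * b k * ε ^ k * q ^ (p + 1)) := by
    have h1 : Summable (fun p : ℕ => q ^ p) := summable_geometric_of_lt_one hq0.le hq1
    have h2 := (h1.mul_left (M * b k * ε ^ k * q))
    apply h2.congr
    intro p
    ring
  have hnormsum : Summable (fun p : ℕ => ‖f (p + 1)‖) :=
    Summable.of_nonneg_of_le (fun _ => norm_nonneg _) hbound hgeo
  have hfsum : Summable f := hs.summable
  have hzero : f 0 = - ∑' p : ℕ, f (p + 1) := by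
    have h1 := Summable.tsum_eq_zero_add hfsum
    rw [hs.tsum_eq] at h1
    linear_combination -h1
  have h1 : ‖f 0‖ ≤ ∑' p : ℕ, ‖f (p + 1)‖ := by
    rw [hzero, norm_neg]
    exact norm_tsum_le_tsum_norm hnormsum
  have h2 : (∑' p : ℕ, ‖f (p + 1)‖) ≤ ∑' p : ℕ, M * b k * ε ^ k * q ^ (p + 1) :=
    Summable.tsum_le_tsum hbound hnormsum hgeo
  have h3 : (∑' p : ℕ, M * b k * ε ^ k * q ^ (p + 1)) = M * b k * ε ^ k * (q / (1 - q)) := by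
    have hq' : ‖q‖ < 1 := by rwa [Real.norm_eq_abs, abs_of_pos hq0]
    have hgs : (∑' p : ℕ, q ^ p) = (1 - q)⁻¹ := tsum_geometric_of_lt_one hq0.le hq1
    calc (∑' p : ℕ, M * b k * ε ^ k * q ^ (p + 1))
        = ∑' p : ℕ, (M * b k * ε ^ k * q) * q ^ p := by
          apply tsum_congr; intro p; ring
      _ = (M * b k * ε ^ k * q) * ∑' p : ℕ, q ^ p := by
          rw [tsum_mul_left]
      _ = M * b k * ε ^ k * (q / (1 - q)) := by
          rw [hgs]; field_simp
  have hlow : c * (b k * ε ^ k) ≤ ‖f 0‖ := by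
    have hf0 : f 0 = g n 0 * Fc k := by
      rw [hfdef]
      simp [iteratedDeriv_zero]
    rw [hf0, norm_mul, hFb k]
    exact mul_le_mul_of_nonneg_right hgc (by positivity)
  have hchain : c * (b k * ε ^ k) ≤ M * (q / (1 - q)) * (b k * ε ^ k) := by
    calc c * (b k * ε ^ k) ≤ ‖f 0‖ := hlow
      _ ≤ ∑' p : ℕ, ‖f (p + 1)‖ := h1
      _ ≤ ∑' p : ℕ, M * b k * ε ^ k * q ^ (p + 1) := h2
      _ = M * b k * ε ^ k * (q / (1 - q)) := h3
      _ = M * (q / (1 - q)) * (b k * ε ^ k) := by ring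
  have hpos : 0 < b k * ε ^ k := by positivity
  have hfin : c ≤ M * (q / (1 - q)) := le_of_mul_le_mul_right hchain hpos
  linarith [hkey]
end
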